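/- Let G be a finite group, k a field of characteristic p > 0, and let {g_i} be representatives of the conjugacy classes of G. Then the dimension over k of the stable center Z(kG)/Z^pr(kG) equals the number of indices i such that p divides |C_G(g_i)|. -/

import Mathlib

open MonoidAlgebra

/-- A witness that the central element `z` of `kG` is "projective", i.e. that
the `kG`-bimodule endomorphism `x ↦ x * z` of `kG` factors through a
projective `kG`-bimodule.  Bimodules over `kG` are modules over
`kG ⊗ kG^op ≅ k[G×G]`, where `kG` itself is a `k[G×G]`-module via
`(g,h) • x = g * x * h⁻¹`; the maps `σ, π` are `k`-linear and equivariance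
for the `k[G×G]`-action is expressed on the group generators `(g,h)`. -/
structure ProjFactorization (k : Type) [Field k] (G : Type) [Group G]
    (z : MonoidAlgebra k G) : Type 1 where
  P : Type
  [acg : AddCommGroup P]
  [modk : Module k P]
  [mod : Module (MonoidAlgebra k (G × G)) P]
  [tower : IsScalarTower k (MonoidAlgebra k (G × G)) P]
  proj : Module.Projective (MonoidAlgebra k (G × G)) P
  σ : MonoidAlgebra k G →ₗ[k] P
  π : P →ₗ[k] MonoidAlgebra k G
  σ_equivariant : ∀ (g h : G) (x : MonoidAlgebra k G),
    σ (single g (1 : k) * x * single h⁻¹ (1 : k)) = single ((g, h) : G × G) (1 : k) • σ x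
  π_equivariant : ∀ (g h : G) (q : P),
    π (single ((g, h) : G × G) (1 : k) • q) = single g (1 : k) * π q * single h⁻¹ (1 : k)
  factors : ∀ x, π (σ x) = x * z

/-- The set `Z^pr(kG)` of central elements of `kG` whose multiplication
endomorphism factors through a projective `kG`-bimodule. -/
def projCenter (k : Type) [Field k] (G : Type) [Group G] : Set (MonoidAlgebra k G) :=
  {z | z ∈ Subalgebra.center k (MonoidAlgebra k G) ∧ Nonempty (ProjFactorization k G z)}

set_option linter.unusedSectionVars false

section StableCenter

variable {k : Type} [Field k] {G : Type} [Group G] [Fintype G] [DecidableEq G]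

/-! ### The trace map and class sums -/

/-- The trace map `w ↦ ∑ g, g w g⁻¹`. -/
noncomputable def Tmap (k : Type) [Field k] (G : Type) [Group G] [Fintype G] :
    MonoidAlgebra k G →ₗ[k] MonoidAlgebra k G :=
  ∑ g : G, (LinearMap.mulLeft k (single g (1:k))).comp (LinearMap.mulRight k (single g⁻¹ (1:k)))

lemma Tmap_apply (w : MonoidAlgebra k G) :
    Tmap k G w = ∑ g : G, single g (1:k) * w * single g⁻¹ 1 := by
  simp [Tmap, mul_assoc]

/-- The class sum of `r`. -/
noncomputable def cs (r : G) : MonoidAlgebra k G :=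
  ∑ x ∈ Finset.univ.filter (fun x => IsConj r x), single x (1:k)

lemma cs_apply (r x : G) : (cs r : MonoidAlgebra k G).coeff x = if IsConj r x then 1 else 0 := by
  classical
  simp only [cs]
  rw [MonoidAlgebra.coeff_sum, Finsupp.finset_sum_apply]
  simp only [MonoidAlgebra.coeff_single, Finsupp.single_apply]
  rw [Finset.sum_ite_eq' (Finset.univ.filter (fun y => IsConj r y)) x (fun _ => (1:k))]
  simp

/-! ### The center of the group algebra -/

lemma center_apply_conj {z : MonoidAlgebra k G}
    (hz : z ∈ Subalgebra.center k (MonoidAlgebra k G)) (g x : G) :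
    z.coeff (g * x * g⁻¹) = z.coeff x := by
  have h := (Subalgebra.mem_center_iff.mp hz) (single g 1)
  have h2 : (single g (1:k) * z).coeff (g * x) = (z * single g (1:k)).coeff (g * x) := by rw [h]
  rw [coeff_single_mul_apply, coeff_mul_single_apply, one_mul, mul_one] at h2
  rw [← h2]; congr 1; group

lemma mem_center_of_conj {z : MonoidAlgebra k G}
    (hz : ∀ g x : G, z.coeff (g * x * g⁻¹) = z.coeff x) :
    z ∈ Subalgebra.center k (MonoidAlgebra k G) := by
  rw [Subalgebra.mem_center_iff]
  intro b
  induction b using MonoidAlgebra.induction_linear with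
  | zero => simp
  | add f g hf hg => rw [add_mul, mul_add, hf, hg]
  | single a c =>
    ext y
    rw [coeff_single_mul_apply, coeff_mul_single_apply, mul_comm]
    congr 1
    have := hz a⁻¹ (y * a⁻¹)
    rw [show a⁻¹ * (y * a⁻¹) * (a⁻¹)⁻¹ = a⁻¹ * y by group] at this
    exact this

lemma cs_mem_center (r : G) :
    (cs r : MonoidAlgebra k G) ∈ Subalgebra.center k (MonoidAlgebra k G) := by
  apply mem_center_of_conj
  intro g x
  rw [cs_apply, cs_apply]
  congr 1
  simp only [eq_iff_iff]
  have hc : IsConj x (g * x * g⁻¹) := by rw [isConj_iff]; exact ⟨g, rfl⟩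
  exact ⟨fun h => h.trans hc.symm, fun h => h.trans hc⟩

/-! ### Counting: the trace of a single is a multiple of a class sum -/

lemma card_conj_fiber (r x : G) (h : IsConj r x) :
    (Finset.univ.filter fun g => g * r * g⁻¹ = x).card =
      Nat.card (Subgroup.centralizer ({r} : Set G)) := by
  classical
  have hcen : Nat.card (Subgroup.centralizer ({r} : Set G)) =
      (Finset.univ.filter fun g => g * r * g⁻¹ = r).card := by
    have e : (Subgroup.centralizer ({r} : Set G)) ≃ {g : G // g * r * g⁻¹ = r} := by
      apply Equiv.subtypeEquivRight
      intro x
      simp only [Subgroup.mem_centralizer_singleton_iff]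
      constructor
      · intro h; rw [h]; group
      · intro h; rw [mul_inv_eq_iff_eq_mul] at h; exact h
    rw [Nat.card_congr e, Nat.card_eq_fintype_card, Fintype.card_subtype]
  rw [hcen]
  obtain ⟨c, hc⟩ := isConj_iff.mp h
  apply Finset.card_bij (fun g _ => c⁻¹ * g)
  · intro a ha
    simp only [Finset.mem_filter, Finset.mem_univ, true_and] at ha ⊢
    rw [mul_inv_rev, inv_inv, show c⁻¹ * a * r * (a⁻¹ * c) = c⁻¹ * (a * r * a⁻¹) * c by group,
      ha, ← hc]
    group
  · intro a _ b _ hab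
    exact mul_left_cancel hab
  · intro b hb
    refine ⟨c * b, ?_, by group⟩
    simp only [Finset.mem_filter, Finset.mem_univ, true_and] at hb ⊢
    rw [mul_inv_rev, show c * b * r * (b⁻¹ * c⁻¹) = c * (b * r * b⁻¹) * c⁻¹ by group, hb, hc]

lemma Tmap_single (r : G) (c : k) :
    Tmap k G (single r c) = ∑ g : G, single (g * r * g⁻¹) c := by
  rw [Tmap_apply]
  congr 1; ext g
  rw [single_mul_single, single_mul_single, one_mul, mul_one]

lemma Tmap_conj (h r : G) :
    Tmap k G (single (h * r * h⁻¹) (1:k)) = Tmap k G (single r 1) := by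
  rw [Tmap_single, Tmap_single]
  apply Finset.sum_bijective (fun g => g * h) (Group.mulRight_bijective h)
  · simp
  · intro g _
    congr 1
    group

lemma Tmap_single_eq (r : G) :
    Tmap k G (single r (1:k)) =
      ((Nat.card (Subgroup.centralizer ({r} : Set G)) : k)) • cs r := by
  rw [Tmap_single]
  ext x
  rw [MonoidAlgebra.coeff_sum, Finsupp.finset_sum_apply]
  simp only [MonoidAlgebra.coeff_single, Finsupp.single_apply]
  rw [MonoidAlgebra.coeff_smul_apply]
  rw [cs_apply]
  by_cases h : IsConj r x
  · rw [if_pos h, smul_eq_mul, mul_one]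
    rw [Finset.sum_boole, ← card_conj_fiber r x h]
  · rw [if_neg h, smul_zero]
    apply Finset.sum_eq_zero
    intro g _
    rw [if_neg]
    intro hc
    exact h (isConj_iff.mpr ⟨g, hc⟩)

/-! ### The image of the trace map is central -/

lemma Tmap_commute_single (w : MonoidAlgebra k G) (g : G) :
    single g (1:k) * Tmap k G w = Tmap k G w * single g (1:k) := by
  rw [Tmap_apply, Finset.mul_sum, Finset.sum_mul]
  apply Finset.sum_bijective (fun h => g * h) (Group.mulLeft_bijective g)
  · simp
  · intro h _
    have hh : single h⁻¹ (1:k) = single ((g*h)⁻¹ : G) 1 * single g 1 := by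
      rw [single_mul_single, one_mul]
      congr 1
      group
    rw [hh]
    calc single g (1:k) * (single h 1 * w * (single (g*h)⁻¹ 1 * single g 1))
        = (single g 1 * single h 1) * w * single (g*h)⁻¹ 1 * single g 1 := by
          simp only [mul_assoc]
      _ = single (g*h) (1:k) * w * single (g*h)⁻¹ 1 * single g 1 := by
          rw [single_mul_single, one_mul]

lemma Tmap_mem_center (w : MonoidAlgebra k G) :
    Tmap k G w ∈ Subalgebra.center k (MonoidAlgebra k G) := by
  rw [Subalgebra.mem_center_iff]
  intro b
  induction b using MonoidAlgebra.induction_linear with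
  | zero => simp
  | add f f' hf hf' => rw [add_mul, mul_add, hf, hf']
  | single a c =>
    have : (single a c : MonoidAlgebra k G) = c • single a 1 := by
      rw [MonoidAlgebra.smul_single, smul_eq_mul, mul_one]
    rw [this, smul_mul_assoc, mul_smul_comm, Tmap_commute_single]

/-! ### Explicit projective factorization for elements in the image of the trace -/

noncomputable def deltaHom (k : Type) [Field k] (G : Type) [Group G] :
    MonoidAlgebra k G →ₐ[k] MonoidAlgebra k (G × G) :=
  mapDomainAlgHom k k (MonoidHom.inl G G)

lemma deltaHom_single (u : G) (c : k) :
    deltaHom k G (single u c) = single ((u, 1) : G × G) c := by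
  simp [deltaHom, mapDomainAlgHom_apply, Finsupp.mapDomain_single]

noncomputable def Dg (k : Type) [Field k] (G : Type) [Group G] [Fintype G] :
    MonoidAlgebra k (G × G) :=
  ∑ t : G, single ((t, t) : G × G) (1:k)

noncomputable def piMap (k : Type) [Field k] (G : Type) [Group G] :
    MonoidAlgebra k (G × G) →ₗ[k] MonoidAlgebra k G :=
  MonoidAlgebra.mapDomainLinearMap k k (fun p : G × G => p.1 * p.2⁻¹)

lemma piMap_single (a b : G) (c : k) :
    piMap k G (single ((a, b) : G × G) c) = single (a * b⁻¹) c := by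
  simp [piMap]

lemma commute_single_inr (h : G) (x : MonoidAlgebra k G) :
    Commute (single ((1, h) : G × G) (1:k)) (deltaHom k G x) := by
  induction x using MonoidAlgebra.induction_linear with
  | zero => simp [Commute, SemiconjBy]
  | add f g hf hg => rw [map_add]; exact hf.add_right hg
  | single a c =>
    rw [deltaHom_single]
    unfold Commute SemiconjBy
    rw [single_mul_single, single_mul_single]
    simp [Prod.ext_iff, mul_comm]

lemma single_inr_mul_Dg (h : G) :
    single ((h⁻¹, 1) : G × G) (1:k) * Dg k G = single ((1, h) : G × G) (1:k) * Dg k G := by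
  rw [Dg, Finset.mul_sum, Finset.mul_sum]
  apply Finset.sum_bijective (fun t => h⁻¹ * t) (Group.mulLeft_bijective h⁻¹)
  · simp
  · intro t _
    rw [single_mul_single, single_mul_single]
    simp [Prod.ext_iff]

noncomputable def sigmaW (w : MonoidAlgebra k G) :
    MonoidAlgebra k G →ₗ[k] MonoidAlgebra k (G × G) :=
  (LinearMap.mulRight k (Dg k G * deltaHom k G w)).comp (deltaHom k G).toLinearMap

lemma sigmaW_apply (w x : MonoidAlgebra k G) :
    sigmaW w x = deltaHom k G x * (Dg k G * deltaHom k G w) := rfl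

lemma sigmaW_equivariant (w : MonoidAlgebra k G) (g h : G) (x : MonoidAlgebra k G) :
    sigmaW w (single g (1:k) * x * single h⁻¹ (1:k)) =
      single ((g, h) : G × G) (1:k) • sigmaW w x := by
  rw [smul_eq_mul, sigmaW_apply, sigmaW_apply, map_mul, map_mul, deltaHom_single,
    deltaHom_single]
  have key : deltaHom k G x * single ((h⁻¹, 1) : G × G) (1:k) * Dg k G
      = single ((1, h) : G × G) (1:k) * deltaHom k G x * Dg k G := by
    rw [mul_assoc, single_inr_mul_Dg, ← mul_assoc, ← (commute_single_inr h x).eq]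
  have hsingle : single ((g, h) : G × G) (1:k)
      = single ((g, 1) : G × G) (1:k) * single ((1, h) : G × G) (1:k) := by
    rw [single_mul_single]; simp
  calc single ((g,1) : G × G) (1:k) * deltaHom k G x * single ((h⁻¹,1) : G × G) (1:k) *
        (Dg k G * deltaHom k G w)
      = single ((g,1) : G × G) (1:k) *
          (deltaHom k G x * single ((h⁻¹,1) : G × G) (1:k) * Dg k G) * deltaHom k G w := by
        simp only [mul_assoc]
    _ = single ((g,1) : G × G) (1:k) *
          (single ((1, h) : G × G) (1:k) * deltaHom k G x * Dg k G) * deltaHom k G w := by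
        rw [key]
    _ = single ((g, h) : G × G) (1:k) * (deltaHom k G x * (Dg k G * deltaHom k G w)) := by
        rw [hsingle]; simp only [mul_assoc]

lemma piMap_equivariant (g h : G) (q : MonoidAlgebra k (G × G)) :
    piMap k G (single ((g, h) : G × G) (1:k) • q) =
      single g (1:k) * piMap k G q * single h⁻¹ (1:k) := by
  rw [smul_eq_mul]
  induction q using MonoidAlgebra.induction_linear with
  | zero => simp
  | add f f' hf hf' => rw [mul_add, map_add, map_add, mul_add, add_mul, hf, hf']
  | single a c =>
    obtain ⟨a, b⟩ := a
    rw [single_mul_single, Prod.mk_mul_mk, piMap_single, piMap_single, single_mul_single,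
      single_mul_single]
    rw [one_mul, mul_one]
    congr 1
    group

lemma piMap_sigmaW (w x : MonoidAlgebra k G) :
    piMap k G (sigmaW w x) = x * Tmap k G w := by
  rw [sigmaW_apply]
  induction x using MonoidAlgebra.induction_linear with
  | zero => simp
  | add f f' hf hf' => rw [map_add, add_mul, map_add, add_mul, hf, hf']
  | single u c =>
    induction w using MonoidAlgebra.induction_linear with
    | zero => simp [Dg]
    | add f f' hf hf' => rw [map_add, map_add, mul_add, mul_add, map_add, mul_add, hf, hf']
    | single a d =>
      rw [deltaHom_single, deltaHom_single, Tmap_apply, Dg]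
      simp only [Finset.mul_sum, Finset.sum_mul, map_sum]
      apply Finset.sum_congr rfl
      intro t _
      simp only [single_mul_single, Prod.mk_mul_mk, piMap_single, one_mul, mul_one]
      congr 1
      group

/-- The explicit projective factorization witnessing that `Tmap w` is
a "projective" central element. -/
noncomputable def projFactTmap (w : MonoidAlgebra k G) :
    ProjFactorization k G (Tmap k G w) where
  P := MonoidAlgebra k (G × G)
  proj := inferInstance
  σ := sigmaW w
  π := piMap k G
  σ_equivariant := sigmaW_equivariant w
  π_equivariant := piMap_equivariant
  factors := fun x => piMap_sigmaW w x

/-! ### Every projective central element is a trace -/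

lemma sum_single_coeff (c : MonoidAlgebra k (G × G)) :
    ∑ u : G × G, single u (c.coeff u) = c := by
  conv_rhs => rw [← MonoidAlgebra.sum_coeff_single c]
  rw [Finsupp.sum]
  apply (Finset.sum_subset (Finset.subset_univ _) ?_).symm
  intro u _ hu
  rw [Finsupp.notMem_support_iff.mp hu, MonoidAlgebra.single_zero]

lemma exists_Tmap_eq {z : MonoidAlgebra k G} (F : ProjFactorization k G z) :
    ∃ w, Tmap k G w = z := by
  letI := F.acg; letI := F.modk; letI := F.mod; letI := F.tower
  obtain ⟨s, hs⟩ := Module.projective_def.mp F.proj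
  have smul_comm' : ∀ (c : k) (a : MonoidAlgebra k (G × G)) (m : F.P),
      a • (c • m) = c • (a • m) := by
    intro c a m
    rw [← algebraMap_smul (MonoidAlgebra k (G × G)) c m, ← mul_smul, ← Algebra.commutes,
      mul_smul, algebraMap_smul]
  set θ : F.P → F.P :=
    fun q => (s q).sum fun m a => ((a : MonoidAlgebra k (G × G)).coeff (1 : G × G)) • m with hθ
  have KEY : ∀ q : F.P,
      ∑ u : G × G, single u (1:k) • θ (single u⁻¹ (1:k) • q) = q := by
    intro q
    have hth : ∀ u : G × G, θ (single u⁻¹ (1:k) • q)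
        = ∑ m ∈ (s q).support, ((s q) m).coeff u • m := by
      intro u
      have h1 : s (single u⁻¹ (1:k) • q) = single u⁻¹ (1:k) • s q := map_smul s _ _
      rw [hθ]
      simp only
      rw [h1, Finsupp.sum_of_support_subset _ (Finsupp.support_smul) _ (by intro m _; simp)]
      apply Finset.sum_congr rfl
      intro m _
      rw [Finsupp.smul_apply, smul_eq_mul, coeff_single_mul_apply, one_mul, inv_inv, mul_one]
    calc ∑ u : G × G, single u (1:k) • θ (single u⁻¹ (1:k) • q)
        = ∑ u : G × G, ∑ m ∈ (s q).support, single u (1:k) • (((s q) m).coeff u • m) := by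
          apply Finset.sum_congr rfl
          intro u _
          rw [hth u, Finset.smul_sum]
      _ = ∑ m ∈ (s q).support, ∑ u : G × G, ((s q) m).coeff u • (single u (1:k) • m) := by
          rw [Finset.sum_comm]
          apply Finset.sum_congr rfl; intro m _
          apply Finset.sum_congr rfl; intro u _
          rw [smul_comm']
      _ = ∑ m ∈ (s q).support, ((s q) m) • m := by
          apply Finset.sum_congr rfl; intro m _
          have : ∀ u : G × G, ((s q) m).coeff u • (single u (1:k) • m)
              = (single u (((s q) m).coeff u) : MonoidAlgebra k (G × G)) • m := by
            intro u
            rw [← smul_assoc, MonoidAlgebra.smul_single', mul_one]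
          simp_rw [this]
          rw [← Finset.sum_smul]
          congr 1
          exact sum_single_coeff ((s q) m)
      _ = q := by
          have h2 := hs q
          rwa [Finsupp.linearCombination_apply, Finsupp.sum] at h2
  set φ : G → MonoidAlgebra k G := fun a => F.π (θ (F.σ (single a 1))) with hφ
  refine ⟨∑ t : G, φ t * single t⁻¹ 1, ?_⟩
  have hz : z = F.π (F.σ 1) := by rw [F.factors 1, one_mul]
  have hσ : ∀ u : G × G, single u⁻¹ (1:k) • F.σ 1 = F.σ (single (u.1⁻¹ * u.2) 1) := by
    intro u
    have := F.σ_equivariant u.1⁻¹ u.2⁻¹ 1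
    rw [mul_one, inv_inv] at this
    rw [show (u⁻¹ : G × G) = (u.1⁻¹, u.2⁻¹) from rfl, ← this, single_mul_single, one_mul]
  have step1 : z = ∑ u : G × G, single u.1 (1:k) * φ (u.1⁻¹ * u.2) * single u.2⁻¹ 1 := by
    rw [hz, ← KEY (F.σ 1), map_sum]
    apply Finset.sum_congr rfl
    intro u _
    rw [hσ u, show u = (u.1, u.2) from rfl]
    rw [F.π_equivariant u.1 u.2]
  rw [step1, Tmap_apply, Fintype.sum_prod_type]
  apply Finset.sum_congr rfl
  intro g _
  rw [Finset.mul_sum, Finset.sum_mul]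
  apply Finset.sum_bijective (fun t => g * t) (Group.mulLeft_bijective g)
  · simp
  · intro t _
    simp only
    rw [show (g * t)⁻¹ = t⁻¹ * g⁻¹ by group, inv_mul_cancel_left]
    rw [show single (t⁻¹ * g⁻¹) (1:k) = single t⁻¹ 1 * single g⁻¹ 1 from by
      rw [single_mul_single, one_mul]]
    simp only [mul_assoc]

/-! ### Linear independence of class sums -/

lemma pi_single_linearIndependent (ι : Type) [Fintype ι] [DecidableEq ι] :
    LinearIndependent k (fun i : ι => Pi.single (M := fun _ => k) i (1:k)) := by
  rw [Fintype.linearIndependent_iff]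
  intro g hg j
  have := congrFun hg j
  simpa [Finset.sum_apply, Pi.single_apply] using this

lemma cs_linearIndependent (S : Finset G)
    (hS : ∀ r ∈ S, ∀ r' ∈ S, IsConj r r' → r = r') :
    LinearIndependent k (fun r : ↥(↑S : Set G) => (cs (r : G) : MonoidAlgebra k G)) := by
  classical
  apply LinearIndependent.of_comp
    (LinearMap.pi (fun r : ↥(↑S : Set G) => ((Finsupp.lapply (r : G) : (G →₀ k) →ₗ[k] k) ∘ₗ (MonoidAlgebra.coeffLinearEquiv k).toLinearMap)))
  have he : (⇑(LinearMap.pi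
        (fun r : ↥(↑S : Set G) => ((Finsupp.lapply (r : G) : (G →₀ k) →ₗ[k] k) ∘ₗ (MonoidAlgebra.coeffLinearEquiv k).toLinearMap))) ∘
      fun r : ↥(↑S : Set G) => (cs (r : G) : MonoidAlgebra k G))
      = fun r : ↥(↑S : Set G) => Pi.single (M := fun _ => k) r (1:k) := by
    funext r
    funext r'
    simp only [Function.comp_apply, LinearMap.pi_apply, LinearMap.comp_apply, LinearEquiv.coe_coe,
      MonoidAlgebra.coeffLinearEquiv_apply, Finsupp.lapply_apply]
    rw [cs_apply, Pi.single_apply]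
    congr 1
    simp only [eq_iff_iff]
    constructor
    · intro h
      exact Subtype.ext ((hS r (Finset.mem_coe.mp r.2) r' (Finset.mem_coe.mp r'.2) h).symm)
    · intro h; rw [h]
  rw [he]
  exact pi_single_linearIndependent ↥(↑S : Set G)

lemma finrank_span_cs (S : Finset G)
    (hS : ∀ r ∈ S, ∀ r' ∈ S, IsConj r r' → r = r') :
    Module.finrank k (Submodule.span k ((fun r => (cs r : MonoidAlgebra k G)) '' ↑S))
      = S.card := by
  rw [Set.image_eq_range, finrank_span_eq_card (cs_linearIndependent S hS)]
  simp

/-! ### Spanning lemmas -/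

lemma span_single_top :
    Submodule.span k (Set.range fun g : G => (single g (1:k) : MonoidAlgebra k G)) = ⊤ := by
  rw [eq_top_iff]
  rintro f -
  have hf : f = ∑ a ∈ f.coeff.support, single a (f.coeff a) := by
    conv_lhs => rw [← MonoidAlgebra.sum_coeff_single f]
    rfl
  rw [hf]
  apply Submodule.sum_mem
  intro a _
  have : (single a (f.coeff a) : MonoidAlgebra k G) = f.coeff a • single a (1:k) := by
    rw [MonoidAlgebra.smul_single', mul_one]
  rw [this]
  exact Submodule.smul_mem _ _ (Submodule.subset_span ⟨a, rfl⟩)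

lemma center_eq_span (R : Finset G) (hR : ∀ g : G, ∃! r, r ∈ R ∧ IsConj r g) :
    Subalgebra.toSubmodule (Subalgebra.center k (MonoidAlgebra k G))
      = Submodule.span k ((fun r => (cs r : MonoidAlgebra k G)) '' ↑R) := by
  apply le_antisymm
  · intro z hz
    rw [Subalgebra.mem_toSubmodule] at hz
    have hdec : z = ∑ r ∈ R, (z.coeff r) • (cs r : MonoidAlgebra k G) := by
      ext x
      rw [MonoidAlgebra.coeff_sum, Finsupp.finset_sum_apply]
      have hterm : ∀ r : G, ((z.coeff r) • (cs r : MonoidAlgebra k G)).coeff x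
          = z.coeff r * (if IsConj r x then 1 else 0) := by
        intro r
        rw [show ((z.coeff r) • (cs r : MonoidAlgebra k G)).coeff x = z.coeff r • ((cs r : MonoidAlgebra k G).coeff x)
          from rfl, cs_apply, smul_eq_mul]
      simp only [hterm]
      obtain ⟨r₀, ⟨hr₀R, hconj⟩, huniq⟩ := hR x
      rw [Finset.sum_eq_single r₀]
      · rw [if_pos hconj, mul_one]
        obtain ⟨c, hc⟩ := isConj_iff.mp hconj
        rw [← hc, center_apply_conj hz]
      · intro r hrR hne
        rw [if_neg, mul_zero]
        intro hcon
        exact hne (huniq r ⟨hrR, hcon⟩)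
      · intro h; exact absurd hr₀R h
    rw [hdec]
    apply Submodule.sum_mem
    intro r hr
    exact Submodule.smul_mem _ _ (Submodule.subset_span ⟨r, hr, rfl⟩)
  · rw [Submodule.span_le]
    rintro _ ⟨r, _, rfl⟩
    rw [SetLike.mem_coe, Subalgebra.mem_toSubmodule]
    exact cs_mem_center r

lemma range_Tmap_eq (p : ℕ) [CharP k p] (R : Finset G)
    (hR : ∀ g : G, ∃! r, r ∈ R ∧ IsConj r g) :
    LinearMap.range (Tmap k G) = Submodule.span k
      ((fun r => (cs r : MonoidAlgebra k G)) ''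
        ↑(R.filter fun g => ¬ p ∣ Nat.card (Subgroup.centralizer ({g} : Set G)))) := by
  apply le_antisymm
  · rw [LinearMap.range_eq_map, ← span_single_top, Submodule.map_span, ← Set.range_comp,
      Submodule.span_le]
    rintro _ ⟨g, rfl⟩
    show Tmap k G (single g 1) ∈ _
    obtain ⟨r, ⟨hrR, hconj⟩, _⟩ := hR g
    obtain ⟨c, hc⟩ := isConj_iff.mp hconj
    have heq : Tmap k G (single g 1) =
        ((Nat.card (Subgroup.centralizer ({r} : Set G)) : k)) • cs r := by
      rw [← hc, Tmap_conj, Tmap_single_eq]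
    rw [heq]
    by_cases hdvd : p ∣ Nat.card (Subgroup.centralizer ({r} : Set G))
    · rw [(CharP.cast_eq_zero_iff k p _).mpr hdvd, zero_smul]
      exact Submodule.zero_mem _
    · apply Submodule.smul_mem
      apply Submodule.subset_span
      exact ⟨r, by simp [hrR, hdvd], rfl⟩
  · rw [Submodule.span_le]
    rintro _ ⟨r, hr, rfl⟩
    simp only [Finset.coe_filter, Set.mem_setOf_eq] at hr
    obtain ⟨hrR, hdvd⟩ := hr
    have hne : ((Nat.card (Subgroup.centralizer ({r} : Set G)) : k)) ≠ 0 := by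
      intro h
      exact hdvd ((CharP.cast_eq_zero_iff k p _).mp h)
    have : (cs r : MonoidAlgebra k G)
        = ((Nat.card (Subgroup.centralizer ({r} : Set G)) : k))⁻¹ •
            Tmap k G (single r 1) := by
      rw [Tmap_single_eq, smul_smul, inv_mul_cancel₀ hne, one_smul]
    show (cs r : MonoidAlgebra k G) ∈ (LinearMap.range (Tmap k G) : Set (MonoidAlgebra k G))
    rw [this]
    exact Submodule.smul_mem _ _ (LinearMap.mem_range_self _ _)

lemma span_projCenter_eq :
    Submodule.span k (projCenter k G) = LinearMap.range (Tmap k G) := by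
  apply le_antisymm
  · rw [Submodule.span_le]
    rintro z ⟨_, ⟨F⟩⟩
    obtain ⟨w, hw⟩ := exists_Tmap_eq F
    exact ⟨w, hw⟩
  · rintro _ ⟨w, rfl⟩
    apply Submodule.subset_span
    exact ⟨Tmap_mem_center w, ⟨projFactTmap w⟩⟩

end StableCenter


set_option maxHeartbeats 1000000 in
set_option synthInstance.maxHeartbeats 400000 in
/-- Let `G` be a finite group, `k` a field of characteristic
`p > 0`, and `{gᵢ}` representatives of the conjugacy classes of `G`.  Then
`dim_k (Z(kG)/Z^pr(kG))` equals the number of indices `i` with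
`p ∣ |C_G(gᵢ)|`.  (Since `Z^pr(kG)` is a `k`-subspace of the center, taking
the span below does not change the set; the quotient is the stable center.) -/
theorem stmt3 (k : Type) [Field k] (G : Type) [Group G] [Fintype G] [DecidableEq G]
    (p : ℕ) [CharP k p] (hp : p ≠ 0)
    (R : Finset G) (hR : ∀ g : G, ∃! r, r ∈ R ∧ IsConj r g) :
    Module.finrank k
      (↥(Subalgebra.toSubmodule (Subalgebra.center k (MonoidAlgebra k G))) ⧸
        (Submodule.span k (projCenter k G)).comap
          (Subalgebra.toSubmodule (Subalgebra.center k (MonoidAlgebra k G))).subtype) =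
      (R.filter fun g => p ∣ Nat.card (Subgroup.centralizer {g})).card := by
  classical
  set Z := Subalgebra.toSubmodule (Subalgebra.center k (MonoidAlgebra k G)) with hZ
  set R' := R.filter fun g => ¬ p ∣ Nat.card (Subgroup.centralizer ({g} : Set G)) with hR'
  have hpair : ∀ r ∈ R, ∀ r' ∈ R, IsConj r r' → r = r' := by
    intro r hr r' hr' hconj
    obtain ⟨r₀, _, huniq⟩ := hR r'
    rw [huniq r ⟨hr, hconj⟩, huniq r' ⟨hr', IsConj.refl r'⟩]
  have hpair' : ∀ r ∈ R', ∀ r' ∈ R', IsConj r r' → r = r' := by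
    intro r hr r' hr' hconj
    exact hpair r (Finset.mem_of_mem_filter r hr) r' (Finset.mem_of_mem_filter r' hr') hconj
  -- the span of the projective center is the range of the trace map
  have hspan : Submodule.span k (projCenter k G) = LinearMap.range (Tmap k G) :=
    span_projCenter_eq
  -- the range of the trace map is contained in the center
  have hle : LinearMap.range (Tmap k G) ≤ Z := by
    rintro _ ⟨w, rfl⟩
    rw [hZ, Subalgebra.mem_toSubmodule]
    exact Tmap_mem_center w
  -- finite dimensionality
  haveI : Module.Finite k (MonoidAlgebra k G) := by
    have e := Finsupp.linearEquivFunOnFinite k k G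
    exact Module.Finite.equiv ((MonoidAlgebra.coeffLinearEquiv k).trans e).symm
  -- dimension of the center
  have hdimZ : Module.finrank k Z = R.card := by
    rw [hZ, center_eq_span R hR, finrank_span_cs R hpair]
  -- dimension of the range of the trace map
  have hdimT : Module.finrank k (LinearMap.range (Tmap k G)) = R'.card := by
    rw [range_Tmap_eq p R hR, finrank_span_cs R' hpair']
  -- dimension of the comap
  set N := (Submodule.span k (projCenter k G)).comap Z.subtype with hN
  have hdimN : Module.finrank k N = R'.card := by
    rw [hN, hspan]
    rw [(Submodule.comapSubtypeEquivOfLe hle).finrank_eq]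
    exact hdimT
  have hquot := Submodule.finrank_quotient_add_finrank N
  rw [hdimN, hdimZ] at hquot
  have hcards : (R.filter fun g => p ∣ Nat.card (Subgroup.centralizer ({g} : Set G))).card
      + R'.card = R.card := by
    rw [hR']
    exact Finset.card_filter_add_card_filter_not _
  omega
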